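/- Let F be a finite field with q elements of characteristic p > 3 with q ≡ 3 (mod 4) (so −1 is not a square in F), and let λ ∈ F with λ ≠ 0, 1. Then E_{1−λ} is the quadratic twist of E_λ by −1, and consequently #E_λ(F) + #E_{1−λ}(F) = 2(q + 1). -/

import Mathlib

/-- The Legendre elliptic curve `y² = x(x-1)(x-λ)`, as the Weierstrass curve with coefficients
`(a₁, a₂, a₃, a₄, a₆) = (0, -(λ+1), 0, λ, 0)`. -/
def Legendre (F : Type*) [Field F] (l : F) : WeierstrassCurve F := ⟨0, -(l + 1), 0, l, 0⟩

/-- The quadratic twist by `d` of a Weierstrass curve of the form `y² = x³ + a₂x² + a₄x + a₆`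
(i.e. with `a₁ = a₃ = 0`): the curve `y² = x³ + d*a₂x² + d²*a₄x + d³*a₆`. -/
def quadTwist {F : Type*} [Field F] (W : WeierstrassCurve F) (d : F) : WeierstrassCurve F :=
  ⟨0, d * W.a₂, 0, d ^ 2 * W.a₄, d ^ 3 * W.a₆⟩

open WeierstrassCurve Affine in
noncomputable def pointEquivAux {F : Type*} [Field F] (W : WeierstrassCurve F) (hΔ : W.Δ ≠ 0) :
    W.toAffine.Point ≃ Option {xy : F × F // W.toAffine.Equation xy.1 xy.2} where
  toFun P := match P with
    | .zero => none
    | @WeierstrassCurve.Affine.Point.some _ _ _ x y h => some ⟨(x, y), h.1⟩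
  invFun o := match o with
    | none => .zero
    | some ⟨(x, y), h⟩ => .some x y ((W.toAffine.equation_iff_nonsingular_of_Δ_ne_zero hΔ).mp h)
  left_inv P := by cases P <;> rfl
  right_inv o := by rcases o with _ | ⟨⟨x, y⟩, h⟩ <;> rfl

/-- Solutions of the affine equation, fibered over `x`. -/
def solEquiv {F : Type*} [Field F] (W : WeierstrassCurve F) :
    {xy : F × F // W.toAffine.Equation xy.1 xy.2} ≃ Σ x : F, {y : F // W.toAffine.Equation x y} where
  toFun P := ⟨P.1.1, P.1.2, P.2⟩
  invFun P := ⟨(P.1, P.2.1), P.2.2⟩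
  left_inv _ := rfl
  right_inv _ := rfl

lemma legendre_equation_iff {F : Type*} [Field F] (l x y : F) :
    (Legendre F l).toAffine.Equation x y ↔ y ^ 2 = x ^ 3 - (l + 1) * x ^ 2 + l * x := by
  rw [WeierstrassCurve.Affine.equation_iff]
  show y ^ 2 + 0 * x * y + 0 * y = x ^ 3 + -(l+1) * x ^ 2 + l * x + 0 ↔ _
  constructor <;> intro h <;> linear_combination h

lemma legendre_card {F : Type*} [Field F] [Fintype F] [DecidableEq F]
    (hF : ringChar F ≠ 2) (l : F) (hΔ : (Legendre F l).Δ ≠ 0) :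
    (Nat.card (Legendre F l).toAffine.Point : ℤ)
      = Fintype.card F + 1 + ∑ x : F, quadraticChar F (x ^ 3 - (l + 1) * x ^ 2 + l * x) := by
  classical
  rw [Nat.card_congr ((pointEquivAux _ hΔ).trans (Equiv.optionCongr (solEquiv _)))]
  rw [Nat.card_eq_fintype_card, Fintype.card_option, Fintype.card_sigma]
  push_cast
  have key : ∀ x : F, (Fintype.card {y : F // (Legendre F l).toAffine.Equation x y} : ℤ)
      = quadraticChar F (x ^ 3 - (l + 1) * x ^ 2 + l * x) + 1 := by
    intro x
    have h1 := quadraticChar_card_sqrts hF (x ^ 3 - (l + 1) * x ^ 2 + l * x)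
    rw [← h1, Set.toFinset_card]
    norm_cast
    exact Fintype.card_congr (Equiv.subtypeEquivRight fun y => by
      rw [legendre_equation_iff]; rfl)
  rw [Finset.sum_congr rfl fun x _ => key x, Finset.sum_add_distrib]
  simp [Finset.card_univ]
  ring

lemma legendre_Δ {F : Type*} [Field F] (l : F) :
    (Legendre F l).Δ = 16 * l ^ 2 * (l - 1) ^ 2 := by
  simp only [WeierstrassCurve.Δ, WeierstrassCurve.b₂, WeierstrassCurve.b₄, WeierstrassCurve.b₆,
    WeierstrassCurve.b₈, Legendre]
  ring

/-- For a finite field `F` of characteristic `p > 3` with `q ≡ 3 (mod 4)` elements and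
`λ ≠ 0, 1`, the curve `E_{1-λ}` is the quadratic twist of `E_λ` by `-1` (i.e. isomorphic to it
over `F`), and consequently `#E_λ(F) + #E_{1-λ}(F) = 2(q + 1)`. -/
theorem legendre_one_sub_eq_neg_one_twist
    (F : Type*) [Field F] [Fintype F] (p : ℕ) [CharP F p] (hp : p.Prime) (hp3 : 3 < p)
    (hq4 : Fintype.card F % 4 = 3) (l : F) (hl0 : l ≠ 0) (hl1 : l ≠ 1) :
    (∃ C : WeierstrassCurve.VariableChange F,
      C • quadTwist (Legendre F l) (-1) = Legendre F (1 - l)) ∧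
    Nat.card (Legendre F l).toAffine.Point +
      Nat.card (Legendre F (1 - l)).toAffine.Point = 2 * (Fintype.card F + 1) := by
  classical
  have hchar : ringChar F = p := ringChar.eq F p
  have hF2 : ringChar F ≠ 2 := by rw [hchar]; omega
  have h2 : (2 : F) ≠ 0 := by
    have h : ((2 : ℕ) : F) ≠ 0 := by
      rw [Ne, CharP.cast_eq_zero_iff F p]
      intro h
      have := Nat.le_of_dvd (by norm_num) h
      omega
    exact_mod_cast h
  have h16 : (16 : F) ≠ 0 := by
    have : (16 : F) = 2 ^ 4 := by norm_num
    rw [this]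
    exact pow_ne_zero _ h2
  have hΔ1 : (Legendre F l).Δ ≠ 0 := by
    rw [legendre_Δ]
    exact mul_ne_zero (mul_ne_zero h16 (pow_ne_zero _ hl0)) (pow_ne_zero _ (sub_ne_zero.mpr hl1))
  have hΔ2 : (Legendre F (1 - l)).Δ ≠ 0 := by
    rw [legendre_Δ]
    refine mul_ne_zero (mul_ne_zero h16 (pow_ne_zero _ (sub_ne_zero.mpr (Ne.symm hl1)))) ?_
    refine pow_ne_zero _ ?_
    intro h
    apply hl0
    linear_combination -h
  constructor
  · refine ⟨⟨1, -1, 0, 0⟩, ?_⟩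
    ext <;> simp [WeierstrassCurve.variableChange_a₁, WeierstrassCurve.variableChange_a₂,
      WeierstrassCurve.variableChange_a₃, WeierstrassCurve.variableChange_a₄,
      WeierstrassCurve.variableChange_a₆, quadTwist, Legendre] <;> ring
  · have hneg : quadraticChar F (-1) = -1 := by
      apply quadraticChar_neg_one_iff_not_isSquare.mpr
      rw [FiniteField.isSquare_neg_one_iff, hq4]
      simp
    set S : ℤ := ∑ x : F, quadraticChar F (x ^ 3 - (l + 1) * x ^ 2 + l * x) with hS
    have hsum : ∑ x : F, quadraticChar F (x ^ 3 - ((1 - l) + 1) * x ^ 2 + (1 - l) * x) = -S := by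
      have step : ∀ x : F, quadraticChar F ((1 - x) ^ 3 - ((1 - l) + 1) * (1 - x) ^ 2
          + (1 - l) * (1 - x)) = - quadraticChar F (x ^ 3 - (l + 1) * x ^ 2 + l * x) := by
        intro x
        have hfac : (1 - x) ^ 3 - ((1 - l) + 1) * (1 - x) ^ 2 + (1 - l) * (1 - x)
            = -1 * (x ^ 3 - (l + 1) * x ^ 2 + l * x) := by ring
        rw [hfac, map_mul, hneg, neg_one_mul]
      calc ∑ x : F, quadraticChar F (x ^ 3 - ((1 - l) + 1) * x ^ 2 + (1 - l) * x)
          = ∑ x : F, quadraticChar F ((1 - x) ^ 3 - ((1 - l) + 1) * (1 - x) ^ 2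
            + (1 - l) * (1 - x)) := by
            refine Fintype.sum_equiv (Equiv.subLeft (1 : F)) _ _ fun x => ?_
            simp [Equiv.subLeft]
        _ = ∑ x : F, - quadraticChar F (x ^ 3 - (l + 1) * x ^ 2 + l * x) :=
            Finset.sum_congr rfl fun x _ => step x
        _ = -S := by rw [hS, Finset.sum_neg_distrib]
    have h1 := legendre_card hF2 l hΔ1
    have h2' := legendre_card hF2 (1 - l) hΔ2
    rw [hsum] at h2'
    have : (Nat.card (Legendre F l).toAffine.Point : ℤ)
        + Nat.card (Legendre F (1 - l)).toAffine.Point = 2 * (Fintype.card F + 1) := by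
      rw [h1, h2']; push_cast [← hS]; ring
    exact_mod_cast this
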